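/- Let α > 0, V₀ > 0 and d > 0. If √V₀ · tanh(√V₀ · d) ≥ α, then for every real-valued φ ∈ H¹(−d,d), ∫_{−d}^{d} |φ'(x)|² dx + V₀ ∫_0^d |φ(x)|² dx − α|φ(0)|² ≥ 0. In particular, if V₀ > α² then this holds for all sufficiently large d. -/

import Mathlib

open MeasureTheory intervalIntegral

lemma my_hasDerivAt_tanh (x : ℝ) :
    HasDerivAt Real.tanh (1 / Real.cosh x ^ 2) x := by
  have hc : Real.cosh x ≠ 0 := (Real.cosh_pos x).ne'
  have h : HasDerivAt (fun y => Real.sinh y / Real.cosh y)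
      ((Real.cosh x * Real.cosh x - Real.sinh x * Real.sinh x) / Real.cosh x ^ 2) x :=
    (Real.hasDerivAt_sinh x).div (Real.hasDerivAt_cosh x) hc
  have h2 : (Real.cosh x * Real.cosh x - Real.sinh x * Real.sinh x) / Real.cosh x ^ 2
      = 1 / Real.cosh x ^ 2 := by
    have := Real.cosh_sq_sub_sinh_sq x
    rw [show Real.cosh x * Real.cosh x - Real.sinh x * Real.sinh x
        = Real.cosh x ^ 2 - Real.sinh x ^ 2 by ring, this]
  rw [h2] at h
  exact h.congr_of_eventuallyEq (Filter.Eventually.of_forall fun y => Real.tanh_eq_sinh_div_cosh y)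

lemma my_continuous_tanh : Continuous Real.tanh := by
  rw [continuous_iff_continuousAt]
  exact fun x => (my_hasDerivAt_tanh x).continuousAt

lemma one_sub_tanh_sq (t : ℝ) : 1 - Real.tanh t ^ 2 = 1 / Real.cosh t ^ 2 := by
  have hc : Real.cosh t ≠ 0 := (Real.cosh_pos t).ne'
  have h := Real.cosh_sq_sub_sinh_sq t
  rw [Real.tanh_eq_sinh_div_cosh]
  field_simp
  exact h

lemma key (β d : ℝ) (hβ : 0 < β) (hd : 0 < d) (φ φ' : ℝ → ℝ)
    (hφ : ∀ x, HasDerivAt φ (φ' x) x) (hφ' : Continuous φ') :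
    β * Real.tanh (β * d) * (φ 0) ^ 2 ≤
      (∫ x in (0:ℝ)..d, (φ' x) ^ 2) + β ^ 2 * ∫ x in (0:ℝ)..d, (φ x) ^ 2 := by
  have hφc : Continuous φ := by
    rw [continuous_iff_continuousAt]; exact fun x => (hφ x).continuousAt
  set W : ℝ → ℝ := fun x => β * Real.tanh (β * (x - d)) with hW
  set F' : ℝ → ℝ := fun x =>
    β ^ 2 * (1 - Real.tanh (β * (x - d)) ^ 2) * (φ x) ^ 2 + W x * (2 * φ x * φ' x) with hF'
  have hlin : Continuous (fun x : ℝ => β * (x - d)) :=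
    continuous_const.mul (continuous_id.sub continuous_const)
  have htc : Continuous (fun x : ℝ => Real.tanh (β * (x - d))) := my_continuous_tanh.comp hlin
  have hWc : Continuous W := continuous_const.mul htc
  have hF'c : Continuous F' := by
    apply Continuous.add
    · exact (continuous_const.mul ((continuous_const.sub (htc.pow 2)))).mul (hφc.pow 2)
    · exact hWc.mul ((continuous_const.mul hφc).mul hφ')
  have hDF : ∀ x, HasDerivAt (fun x => W x * (φ x) ^ 2) (F' x) x := by
    intro x
    have h1 : HasDerivAt (fun x => β * (x - d)) β x := by
      simpa using ((hasDerivAt_id x).sub_const d).const_mul β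
    have h2 : HasDerivAt W (β ^ 2 * (1 - Real.tanh (β * (x - d)) ^ 2)) x := by
      have := ((my_hasDerivAt_tanh (β * (x - d))).comp x h1).const_mul β
      refine this.congr_deriv ?_
      rw [one_sub_tanh_sq]; ring
    have h3 : HasDerivAt (fun x => (φ x) ^ 2) (2 * φ x * φ' x) x := by
      simpa [mul_comm, mul_assoc] using ((hφ x).fun_pow 2)
    simpa [F'] using h2.fun_mul h3
  have hint : ∫ x in (0:ℝ)..d, F' x = W d * (φ d) ^ 2 - W 0 * (φ 0) ^ 2 :=
    intervalIntegral.integral_eq_sub_of_hasDerivAt (fun x _ => hDF x)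
      (hF'c.intervalIntegrable 0 d)
  have hWd : W d = 0 := by simp [W]
  have hW0 : W 0 = -(β * Real.tanh (β * d)) := by
    simp only [hW]
    rw [show β * ((0:ℝ) - d) = -(β * d) by ring, Real.tanh_neg]
    ring
  have hsq : 0 ≤ ∫ x in (0:ℝ)..d, (φ' x - W x * φ x) ^ 2 :=
    intervalIntegral.integral_nonneg hd.le (fun x _ => sq_nonneg _)
  have hsplit : (∫ x in (0:ℝ)..d, (φ' x - W x * φ x) ^ 2)
      = (∫ x in (0:ℝ)..d, (φ' x) ^ 2) + β ^ 2 * (∫ x in (0:ℝ)..d, (φ x) ^ 2)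
        - ∫ x in (0:ℝ)..d, F' x := by
    rw [← intervalIntegral.integral_const_mul, ← intervalIntegral.integral_add (f := fun x => φ' x ^ 2) (g := fun x => β ^ 2 * φ x ^ 2)
      ((hφ'.pow 2).intervalIntegrable 0 d)
      ((continuous_const.mul (hφc.pow 2)).intervalIntegrable 0 d),
      ← intervalIntegral.integral_sub (f := fun x => φ' x ^ 2 + β ^ 2 * φ x ^ 2) (g := fun x => F' x)
      (((hφ'.pow 2).add (continuous_const.mul (hφc.pow 2))).intervalIntegrable 0 d)
      (hF'c.intervalIntegrable 0 d)]
    apply intervalIntegral.integral_congr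
    intro x _
    simp only [F', W]
    ring
  have h5 := hsplit ▸ hsq
  rw [hint, hWd, hW0] at h5
  linarith

/-- If `√V₀ tanh(√V₀ d) ≥ α` then the Neumann form
`∫_{-d}^d |φ'|² + V₀∫_0^d |φ|² - α|φ(0)|²` is nonnegative for every `φ ∈ H¹(-d,d)`;
in particular for `V₀ > α²` this holds for all sufficiently large `d`. -/
theorem stmt_8 (α V₀ : ℝ) (hα : 0 < α) (hV₀ : 0 < V₀) :
    (∀ d : ℝ, 0 < d → α ≤ Real.sqrt V₀ * Real.tanh (Real.sqrt V₀ * d) →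
      ∀ φ φ' : ℝ → ℝ, (∀ x, HasDerivAt φ (φ' x) x) → Continuous φ' →
        0 ≤ (∫ x in (-d)..d, (φ' x) ^ 2) + V₀ * (∫ x in (0:ℝ)..d, (φ x) ^ 2)
            - α * (φ 0) ^ 2) ∧
    (α ^ 2 < V₀ → ∃ d₀ > (0:ℝ), ∀ d ≥ d₀, α ≤ Real.sqrt V₀ * Real.tanh (Real.sqrt V₀ * d)) := by
  set β := Real.sqrt V₀ with hβdef
  have hβ : 0 < β := Real.sqrt_pos.mpr hV₀
  have hβ2 : β ^ 2 = V₀ := Real.sq_sqrt hV₀.le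
  constructor
  · intro d hd hcrit φ φ' hφ hφ'
    have hkey := key β d hβ hd φ φ' hφ hφ'
    have hpos : 0 ≤ ∫ x in (-d)..0, (φ' x) ^ 2 :=
      intervalIntegral.integral_nonneg (by linarith) (fun x _ => sq_nonneg _)
    have hsplit : (∫ x in (-d)..0, (φ' x) ^ 2) + (∫ x in (0:ℝ)..d, (φ' x) ^ 2)
        = ∫ x in (-d)..d, (φ' x) ^ 2 :=
      intervalIntegral.integral_add_adjacent_intervals
        ((hφ'.pow 2).intervalIntegrable _ _) ((hφ'.pow 2).intervalIntegrable _ _)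
    have h0 : α * (φ 0) ^ 2 ≤ β * Real.tanh (β * d) * (φ 0) ^ 2 :=
      mul_le_mul_of_nonneg_right hcrit (sq_nonneg _)
    rw [← hβ2]
    linarith
  · intro hαV
    have hαβ : α < β := by
      rw [hβdef]
      exact (Real.lt_sqrt hα.le).mpr hαV
    have hβα : 0 < β - α := sub_pos.mpr hαβ
    refine ⟨1 / (β - α), by positivity, fun d hd => ?_⟩
    set t := β * d with ht
    have hd0 : 0 < d := lt_of_lt_of_le (by positivity) hd
    have ht0 : 0 < t := mul_pos hβ hd0
    have hcosh : Real.exp t / 2 ≤ Real.cosh t := by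
      rw [Real.cosh_eq]
      have := (Real.exp_pos (-t)).le
      linarith
    have h1tanh : 1 - Real.tanh t ≤ 2 * Real.exp (-(2 * t)) := by
      have hc : 0 < Real.cosh t := Real.cosh_pos t
      have heq : 1 - Real.tanh t = Real.exp (-t) / Real.cosh t := by
        rw [Real.tanh_eq_sinh_div_cosh, ← Real.cosh_sub_sinh]
        field_simp
      have h2 : Real.exp (-t) / Real.cosh t ≤ Real.exp (-t) / (Real.exp t / 2) :=
        div_le_div_of_nonneg_left (Real.exp_pos _).le (by positivity) hcosh
      have h3 : Real.exp (-t) / (Real.exp t / 2) = 2 * Real.exp (-(2 * t)) := by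
        rw [show -(2 * t) = -t + -t by ring, Real.exp_add]
        rw [Real.exp_neg]
        have he := Real.exp_ne_zero t
        field_simp
      rw [heq, ← h3]
      exact h2
    have h1 : 1 ≤ d * (β - α) := (div_le_iff₀ hβα).mp hd
    have hexp2 : 2 * β / (β - α) ≤ Real.exp (2 * t) := by
      have hlb : 2 * β / (β - α) ≤ 1 + 2 * t := by
        rw [div_le_iff₀ hβα, ht]
        nlinarith [mul_nonneg hβ.le (sub_nonneg.mpr h1)]
      exact hlb.trans (by linarith [Real.add_one_le_exp (2 * t)])
    have hexp : 2 * Real.exp (-(2 * t)) ≤ (β - α) / β := by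
      have h3 : 2 * β ≤ Real.exp (2 * t) * (β - α) := (div_le_iff₀ hβα).mp hexp2
      have he : 0 < Real.exp (2 * t) := Real.exp_pos _
      rw [Real.exp_neg, le_div_iff₀ hβ]
      nlinarith [mul_inv_cancel₀ (Real.exp_ne_zero (2 * t))]
    have hfin : β * (1 - Real.tanh t) ≤ β - α := by
      have := mul_le_mul_of_nonneg_left (h1tanh.trans hexp) hβ.le
      have heq2 : β * ((β - α) / β) = β - α := by field_simp
      linarith [heq2 ▸ this]
    nlinarith [hfin]
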